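/- Let ℓ_1,…,ℓ_k be pairwise non-proportional nonzero linear forms in S = ℝ[x,y,z] with dual points X = (p_1,…,p_k), and let d > r ≥ 0 be integers. Then every homogeneous polynomial of degree d belongs to the ideal ⟨ℓ_1^{r+1},…,ℓ_k^{r+1}⟩ if and only if d < α_{d−r}(X). -/

import Mathlib

open MvPolynomial

noncomputable section

/-- The polynomial ring `S = ℝ[x,y,z]`. -/
abbrev S3 : Type := MvPolynomial (Fin 3) ℝ

/-- The linear form with coefficient vector `p`, i.e. `p 0 • x + p 1 • y + p 2 • z`;
`p` is the dual point of this linear form. -/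
def linForm (p : Fin 3 → ℝ) : S3 := ∑ i, MvPolynomial.C (p i) * MvPolynomial.X i

/-- Iterated partial derivative along a list of coordinate directions, as a linear map. -/
def diffOp (L : List (Fin 3)) : S3 →ₗ[ℝ] S3 :=
  L.foldr (fun i f => (MvPolynomial.pderiv (R := ℝ) i).toLinearMap ∘ₗ f) LinearMap.id

/-- `F` vanishes to order `≥ s` at the point `p`: every iterated partial derivative of
total order at most `s - 1` vanishes at `p`. -/
def VanishesToOrder (F : S3) (p : Fin 3 → ℝ) (s : ℕ) : Prop :=
  ∀ L : List (Fin 3), L.length < s → MvPolynomial.eval p (diffOp L F) = 0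

/-- The subspace of polynomials vanishing to order `≥ s` at `p`. -/
def vanishSubmodule (p : Fin 3 → ℝ) (s : ℕ) : Submodule ℝ S3 :=
  ⨅ L ∈ {L : List (Fin 3) | L.length < s},
    LinearMap.ker ((MvPolynomial.aeval p).toLinearMap ∘ₗ diffOp L)

/-- Dimension of the degree-`d` graded piece of an ideal of `S`. -/
def idealDim (I : Ideal S3) (d : ℕ) : ℕ :=
  Module.finrank ℝ
    ↥(I.restrictScalars ℝ ⊓ MvPolynomial.homogeneousSubmodule (Fin 3) ℝ d)

/-- Dimension of the space of degree-`d` homogeneous polynomials vanishing to order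
`≥ m i` at each point `p i`. -/
def fatDim {k : ℕ} (p : Fin k → (Fin 3 → ℝ)) (m : Fin k → ℕ) (d : ℕ) : ℕ :=
  Module.finrank ℝ
    ↥(MvPolynomial.homogeneousSubmodule (Fin 3) ℝ d ⊓ ⨅ i, vanishSubmodule (p i) (m i))

/-- A list of vectors of `ℝ³` is pairwise non-proportional and nonzero. -/
def PairwiseNonProp {k : ℕ} (p : Fin k → (Fin 3 → ℝ)) : Prop :=
  (∀ i, p i ≠ 0) ∧ ∀ i j, i ≠ j → ∀ c : ℝ, p j ≠ c • p i

/-- `α_s(X)`: least degree of a nonzero homogeneous polynomial vanishing to order `≥ s`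
at every point of the list `X`. -/
def alphaDeg {k : ℕ} (p : Fin k → (Fin 3 → ℝ)) (s : ℕ) : ℕ :=
  sInf {d : ℕ | ∃ F : S3, F ≠ 0 ∧ F.IsHomogeneous d ∧ ∀ i, VanishesToOrder F (p i) s}

/-- The Waldschmidt constant `α̂(X) = inf { α_s(X)/s : s ≥ 1 }`. -/
def waldschmidt {k : ℕ} (p : Fin k → (Fin 3 → ℝ)) : ℝ :=
  sInf {x : ℝ | ∃ s : ℕ, 1 ≤ s ∧ x = (alphaDeg p s : ℝ) / (s : ℝ)}

/-- Integer binomial coefficient `C(m, 2)`, zero for `m < 2`. -/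
def choose2 (m : ℤ) : ℤ := if m < 2 then 0 else m * (m - 1) / 2

namespace Aux13

/-- weight factor: product of factorials -/
def wf (α : Fin 3 →₀ ℕ) : ℝ := ∏ i, ((α i).factorial : ℝ)

lemma wf_pos (α : Fin 3 →₀ ℕ) : 0 < wf α :=
  Finset.prod_pos fun i _ => by positivity

lemma wf_add_single (j : Fin 3) (α : Fin 3 →₀ ℕ) :
    wf (Finsupp.single j 1 + α) = (α j + 1) * wf α := by
  unfold wf
  rw [← Finset.mul_prod_erase Finset.univ _ (Finset.mem_univ j),
      ← Finset.mul_prod_erase Finset.univ (fun i => ((α i).factorial : ℝ)) (Finset.mem_univ j),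
      ← mul_assoc]
  congr 1
  · rw [Finsupp.add_apply, Finsupp.single_eq_same, add_comm 1 (α j), Nat.factorial_succ]
    push_cast; ring
  · apply Finset.prod_congr rfl
    intro i hi
    have : i ≠ j := (Finset.mem_erase.mp hi).1
    simp [Finsupp.add_apply, Finsupp.single_apply, this.symm]

/-- the apolarity pairing -/
def B (F G : S3) : ℝ := ∑ α ∈ F.support, wf α * F.coeff α * G.coeff α

lemma B_eq_sum (F G : S3) {s : Finset (Fin 3 →₀ ℕ)} (h : F.support ⊆ s) :
    B F G = ∑ α ∈ s, wf α * F.coeff α * G.coeff α := by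
  refine Finset.sum_subset h fun α _ hα => ?_
  rw [MvPolynomial.notMem_support_iff.mp hα]
  ring

lemma B_symm (F G : S3) : B F G = B G F := by
  rw [B_eq_sum F G (Finset.subset_union_left (s₂ := G.support)),
      B_eq_sum G F (Finset.subset_union_right (s₁ := F.support)), Finset.union_comm]
  exact Finset.sum_congr rfl fun α _ => by ring

lemma B_add_left (F F' G : S3) : B (F + F') G = B F G + B F' G := by
  have h1 : (F + F').support ⊆ F.support ∪ F'.support := MvPolynomial.support_add
  rw [B_eq_sum (F + F') G h1, B_eq_sum F G Finset.subset_union_left,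
      B_eq_sum F' G Finset.subset_union_right, ← Finset.sum_add_distrib]
  exact Finset.sum_congr rfl fun α _ => by rw [MvPolynomial.coeff_add]; ring

lemma B_smul_left (c : ℝ) (F G : S3) : B (c • F) G = c * B F G := by
  rw [B_eq_sum (c • F) G (Finsupp.support_smul), B, Finset.mul_sum]
  exact Finset.sum_congr rfl fun α _ => by rw [MvPolynomial.coeff_smul]; simp; ring

lemma B_add_right (F G G' : S3) : B F (G + G') = B F G + B F G' := by
  unfold B
  rw [← Finset.sum_add_distrib]
  exact Finset.sum_congr rfl fun α _ => by rw [MvPolynomial.coeff_add]; ring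

lemma B_smul_right (c : ℝ) (F G : S3) : B F (c • G) = c * B F G := by
  unfold B
  rw [Finset.mul_sum]
  exact Finset.sum_congr rfl fun α _ => by rw [MvPolynomial.coeff_smul]; simp; ring

lemma B_zero_left (G : S3) : B 0 G = 0 := by simp [B]

lemma B_sum_left {ι : Type*} (t : Finset ι) (F : ι → S3) (G : S3) :
    B (∑ i ∈ t, F i) G = ∑ i ∈ t, B (F i) G := by
  classical
  induction t using Finset.induction with
  | empty => simp [B_zero_left]
  | @insert a s h ih => rw [Finset.sum_insert h, Finset.sum_insert h, B_add_left, ih]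

lemma B_monomial_left (α : Fin 3 →₀ ℕ) (a : ℝ) (G : S3) :
    B (monomial α a) G = wf α * a * G.coeff α := by
  have h : (monomial α a : S3).support ⊆ {α} := MvPolynomial.support_monomial_subset
  rw [B_eq_sum _ G h, Finset.sum_singleton, MvPolynomial.coeff_monomial, if_pos rfl]

lemma B_self_nonneg (F : S3) : 0 ≤ B F F :=
  Finset.sum_nonneg fun α _ => by
    have := wf_pos α
    have : wf α * F.coeff α * F.coeff α = wf α * (F.coeff α)^2 := by ring
    rw [this]; positivity

lemma eq_zero_of_B_self (F : S3) (h : B F F = 0) : F = 0 := by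
  have hnn : ∀ α ∈ F.support, 0 ≤ wf α * F.coeff α * F.coeff α := fun α _ => by
    have h1 : wf α * F.coeff α * F.coeff α = wf α * (F.coeff α)^2 := by ring
    rw [h1]; have := wf_pos α; positivity
  have := (Finset.sum_eq_zero_iff_of_nonneg hnn).mp h
  ext α
  by_cases hα : α ∈ F.support
  · have h2 := this α hα
    have h3 := (wf_pos α).ne'
    have : F.coeff α = 0 := by
      by_contra hc
      exact absurd h2 (by
        have : wf α * F.coeff α * F.coeff α ≠ 0 := by
          apply mul_ne_zero (mul_ne_zero h3 hc) hc
        simpa using this)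
    simpa using this
  · simpa using MvPolynomial.notMem_support_iff.mp hα


lemma B_C_mul_left (a : ℝ) (F G : S3) : B (MvPolynomial.C a * F) G = a * B F G := by
  rw [MvPolynomial.C_mul', B_smul_left]

lemma B_C_mul_right (a : ℝ) (F G : S3) : B F (MvPolynomial.C a * G) = a * B F G := by
  rw [MvPolynomial.C_mul', B_smul_right]

lemma B_X_mul (j : Fin 3) (F G : S3) :
    B (MvPolynomial.X j * F) G = B F (MvPolynomial.pderiv j G) := by
  induction F using MvPolynomial.induction_on' with
  | add F F' hF hF' =>
    rw [mul_add, B_add_left, B_add_left, hF, hF']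
  | monomial α a =>
    induction G using MvPolynomial.induction_on' with
    | add G G' hG hG' => rw [map_add, B_add_right, B_add_right, hG, hG']
    | monomial β b =>
      rw [MvPolynomial.X, MvPolynomial.monomial_mul, one_mul, MvPolynomial.pderiv_monomial,
        B_monomial_left, B_monomial_left, MvPolynomial.coeff_monomial,
        MvPolynomial.coeff_monomial]
      by_cases h : β = Finsupp.single j 1 + α
      · have h1 : β - Finsupp.single j 1 = α := by
          rw [h, add_comm]; exact add_tsub_cancel_right α (Finsupp.single j 1)
        have h2 : β j = α j + 1 := by
          rw [h, Finsupp.add_apply, Finsupp.single_eq_same]; omega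
        rw [if_pos h, if_pos h1, h2, wf_add_single]
        push_cast; ring
      · rw [if_neg h]
        by_cases h2 : β - Finsupp.single j 1 = α
        · by_cases h3 : β j = 0
          · rw [if_pos h2, h3]; push_cast; ring
          · exfalso
            apply h
            have h4 : Finsupp.single j 1 ≤ β := by
              rw [Finsupp.single_le_iff]; omega
            rw [← h2, add_comm, tsub_add_cancel_of_le h4]
        · rw [if_neg h2]; ring

lemma B_X_mul' (j : Fin 3) (F G : S3) :
    B F (MvPolynomial.X j * G) = B (MvPolynomial.pderiv j F) G := by
  rw [B_symm, B_X_mul, B_symm]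

lemma coeff_pderiv (j : Fin 3) (G : S3) (α : Fin 3 →₀ ℕ) :
    (MvPolynomial.pderiv j G).coeff α = (α j + 1) * G.coeff (Finsupp.single j 1 + α) := by
  have h := B_X_mul j (monomial α 1) G
  rw [MvPolynomial.X, MvPolynomial.monomial_mul, one_mul, B_monomial_left, B_monomial_left,
    wf_add_single] at h
  have hw := (wf_pos α).ne'
  have h2 : wf α * ((MvPolynomial.pderiv j G).coeff α)
      = wf α * (((α j : ℝ) + 1) * G.coeff (Finsupp.single j 1 + α)) := by
    linarith [h]
  have h3 := mul_left_cancel₀ hw h2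
  push_cast
  linarith [h3]

lemma pderiv_comm (i j : Fin 3) (F : S3) :
    MvPolynomial.pderiv i (MvPolynomial.pderiv j F) =
      MvPolynomial.pderiv j (MvPolynomial.pderiv i F) := by
  apply MvPolynomial.ext
  intro α
  rw [coeff_pderiv, coeff_pderiv, coeff_pderiv, coeff_pderiv]
  have h1 : Finsupp.single j 1 + (Finsupp.single i 1 + α)
      = Finsupp.single i 1 + (Finsupp.single j 1 + α) := by
    rw [← add_assoc, ← add_assoc, add_comm (Finsupp.single j 1) (Finsupp.single i 1)]
  rw [h1]
  by_cases hij : i = j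
  · subst hij; ring
  · have h2 : (Finsupp.single j 1 + α : Fin 3 →₀ ℕ) i = α i := by
      rw [Finsupp.add_apply, Finsupp.single_apply, if_neg (fun h => hij h.symm)]; omega
    have h3 : (Finsupp.single i 1 + α : Fin 3 →₀ ℕ) j = α j := by
      rw [Finsupp.add_apply, Finsupp.single_apply, if_neg hij]; omega
    rw [h2, h3]; ring


/-- degree over all coordinates -/
lemma degree_eq_sum_univ (α : Fin 3 →₀ ℕ) : Finsupp.degree α = ∑ i, α i := by
  unfold Finsupp.degree
  exact Finset.sum_subset (Finset.subset_univ _) fun i _ hi => by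
    simpa using Finsupp.notMem_support_iff.mp hi

lemma degree_add_single (j : Fin 3) (α : Fin 3 →₀ ℕ) :
    Finsupp.degree (Finsupp.single j 1 + α) = Finsupp.degree α + 1 := by
  rw [degree_eq_sum_univ, degree_eq_sum_univ]
  have : ∀ i : Fin 3, (Finsupp.single j 1 + α : Fin 3 →₀ ℕ) i
      = α i + (if j = i then 1 else 0) := by
    intro i; rw [Finsupp.add_apply, Finsupp.single_apply]; omega
  rw [Finset.sum_congr rfl fun i _ => this i, Finset.sum_add_distrib]
  simp

lemma isHomogeneous_pderiv {F : S3} {n : ℕ} (hF : F.IsHomogeneous n) (j : Fin 3) :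
    (MvPolynomial.pderiv j F).IsHomogeneous (n - 1) := by
  intro α hα
  rw [coeff_pderiv] at hα
  have h1 : F.coeff (Finsupp.single j 1 + α) ≠ 0 := by
    intro h; rw [h] at hα; simpa using hα
  have h2' : Finsupp.degree (Finsupp.single j 1 + α) = n := by
    rw [Finsupp.degree_eq_weight_one]; exact hF h1
  have h3 := degree_add_single j α
  have h4 : Finsupp.degree α = n - 1 := by omega
  rw [Finsupp.degree_eq_weight_one] at h4
  exact h4

lemma hom_degree_of_coeff {F : S3} {n : ℕ} (hF : F.IsHomogeneous n) {α : Fin 3 →₀ ℕ}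
    (h : F.coeff α ≠ 0) : Finsupp.degree α = n := by
  have := hF h
  rw [Finsupp.degree_eq_weight_one]
  exact this

lemma B_hom_ne {F G : S3} {a b : ℕ} (hF : F.IsHomogeneous a) (hG : G.IsHomogeneous b)
    (hab : a ≠ b) : B F G = 0 := by
  apply Finset.sum_eq_zero
  intro α hα
  have h1 : F.coeff α ≠ 0 := MvPolynomial.mem_support_iff.mp hα
  have h2 : G.coeff α = 0 := by
    apply hG.coeff_eq_zero
    rw [hom_degree_of_coeff hF h1]
    exact hab
  rw [h2]; ring

/-! diffOp lemmas -/

lemma diffOp_nil (F : S3) : diffOp [] F = F := rfl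

lemma diffOp_cons (i : Fin 3) (L : List (Fin 3)) (F : S3) :
    diffOp (i :: L) F = MvPolynomial.pderiv i (diffOp L F) := rfl

lemma diffOp_append (L₁ L₂ : List (Fin 3)) (F : S3) :
    diffOp (L₁ ++ L₂) F = diffOp L₁ (diffOp L₂ F) := by
  induction L₁ with
  | nil => rfl
  | cons i L ih => rw [List.cons_append, diffOp_cons, diffOp_cons, ih]

lemma pderiv_diffOp (j : Fin 3) (L : List (Fin 3)) (F : S3) :
    MvPolynomial.pderiv j (diffOp L F) = diffOp L (MvPolynomial.pderiv j F) := by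
  induction L with
  | nil => rfl
  | cons i L ih => rw [diffOp_cons, diffOp_cons, ← ih, pderiv_comm]

lemma diffOp_isHomogeneous {F : S3} {n : ℕ} (hF : F.IsHomogeneous n) (L : List (Fin 3)) :
    (diffOp L F).IsHomogeneous (n - L.length) := by
  induction L with
  | nil => simpa [diffOp_nil] using hF
  | cons i L ih =>
    rw [diffOp_cons]
    have := isHomogeneous_pderiv ih i
    have he : n - L.length - 1 = n - (i :: L).length := by
      simp [List.length_cons]; omega
    rwa [he] at this

/-! Euler identity -/

lemma euler {F : S3} {n : ℕ} (hF : F.IsHomogeneous n) :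
    ∑ j, MvPolynomial.X j * MvPolynomial.pderiv j F = (n : ℝ) • F := by
  conv_lhs => rw [F.as_sum]
  conv_rhs => rw [F.as_sum]
  rw [Finset.smul_sum]
  have expand : ∀ j : Fin 3,
      MvPolynomial.X j * MvPolynomial.pderiv j (∑ v ∈ F.support, monomial v (F.coeff v))
        = ∑ v ∈ F.support, MvPolynomial.X j * MvPolynomial.pderiv j (monomial v (F.coeff v)) := by
    intro j; rw [map_sum, Finset.mul_sum]
  rw [Finset.sum_congr rfl fun j _ => expand j, Finset.sum_comm]
  apply Finset.sum_congr rfl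
  intro α hα
  have hdeg : Finsupp.degree α = n :=
    hom_degree_of_coeff hF (MvPolynomial.mem_support_iff.mp hα)
  have key : ∀ j : Fin 3,
      MvPolynomial.X j * MvPolynomial.pderiv j (monomial α (F.coeff α))
        = monomial α ((α j : ℝ) * F.coeff α) := by
    intro j
    rw [MvPolynomial.pderiv_monomial]
    by_cases h : α j = 0
    · rw [h]; push_cast; simp
    · have h4 : Finsupp.single j 1 ≤ α := by rw [Finsupp.single_le_iff]; omega
      rw [MvPolynomial.X, MvPolynomial.monomial_mul, one_mul, add_comm,
        tsub_add_cancel_of_le h4]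
      congr 1
      ring
  rw [Finset.sum_congr rfl fun j _ => key j]
  rw [← map_sum, ← Finset.sum_mul]
  have : (∑ j, (α j : ℝ)) = (n : ℝ) := by
    rw [← Nat.cast_sum, ← degree_eq_sum_univ, hdeg]
  rw [this, ← smul_eq_mul, MvPolynomial.smul_monomial]

lemma euler_eval {F : S3} {n : ℕ} (hF : F.IsHomogeneous n) (q : Fin 3 → ℝ) :
    ∑ j, q j * MvPolynomial.eval q (MvPolynomial.pderiv j F)
      = (n : ℝ) * MvPolynomial.eval q F := by
  have h := congrArg (MvPolynomial.eval q) (euler hF)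
  rw [map_sum, MvPolynomial.smul_eq_C_mul, MvPolynomial.eval_mul, MvPolynomial.eval_C] at h
  rw [← h]
  exact Finset.sum_congr rfl fun j _ => by rw [MvPolynomial.eval_mul, MvPolynomial.eval_X]


/-! mprod and linForm -/

def mprod (L : List (Fin 3)) : S3 := (L.map MvPolynomial.X).prod

lemma mprod_nil : mprod [] = 1 := rfl

lemma mprod_cons (i : Fin 3) (L : List (Fin 3)) :
    mprod (i :: L) = MvPolynomial.X i * mprod L := by
  unfold mprod; rw [List.map_cons, List.prod_cons]

lemma mprod_isHomogeneous (L : List (Fin 3)) : (mprod L).IsHomogeneous L.length := by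
  induction L with
  | nil => exact MvPolynomial.isHomogeneous_one _ _
  | cons i L ih =>
    rw [mprod_cons]
    have := (MvPolynomial.isHomogeneous_X ℝ i).mul ih
    simpa [add_comm] using this

lemma linForm_isHomogeneous (q : Fin 3 → ℝ) : (linForm q).IsHomogeneous 1 :=
  MvPolynomial.IsHomogeneous.sum _ _ _ fun i _ => MvPolynomial.isHomogeneous_C_mul_X _ _

lemma B_mprod_mul (L : List (Fin 3)) (F G : S3) :
    B (mprod L * F) G = B F (diffOp L G) := by
  induction L generalizing G with
  | nil => rw [mprod_nil, one_mul, diffOp_nil]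
  | cons i L ih =>
    rw [mprod_cons, mul_assoc, B_X_mul, ih, diffOp_cons, pderiv_diffOp]

lemma eval_eq_coeff_zero_of_hom {H : S3} (hH : H.IsHomogeneous 0) (q : Fin 3 → ℝ) :
    MvPolynomial.eval q H = H.coeff 0 := by
  have hsupp : H.support ⊆ {0} := by
    intro α hα
    have := hom_degree_of_coeff hH (MvPolynomial.mem_support_iff.mp hα)
    rw [Finsupp.degree_eq_zero_iff] at this
    simpa using this
  rw [MvPolynomial.eval_eq]
  rw [Finset.sum_subset hsupp]
  · simp
  · intro α _ hα
    rw [MvPolynomial.notMem_support_iff.mp hα]; ring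

lemma B_one_right (H : S3) : B H 1 = H.coeff 0 := by
  have : (1 : S3) = monomial 0 1 := by simp
  rw [B_symm, this, B_monomial_left]
  simp [wf]

lemma B_linForm_pow (q : Fin 3 → ℝ) {H : S3} {e : ℕ} (hH : H.IsHomogeneous e) :
    B H (linForm q ^ e) = (e.factorial : ℝ) * MvPolynomial.eval q H := by
  induction e generalizing H with
  | zero =>
    rw [pow_zero, B_one_right, eval_eq_coeff_zero_of_hom hH]
    simp
  | succ e ih =>
    rw [pow_succ, mul_comm (linForm q ^ e) (linForm q)]
    have hexp : linForm q * linForm q ^ e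
        = ∑ j, MvPolynomial.C (q j) * (MvPolynomial.X j * linForm q ^ e) := by
      unfold linForm
      rw [Finset.sum_mul]
      exact Finset.sum_congr rfl fun j _ => by ring
    rw [hexp]
    have hsum : B H (∑ j, MvPolynomial.C (q j) * (MvPolynomial.X j * linForm q ^ e))
        = ∑ j, B H (MvPolynomial.C (q j) * (MvPolynomial.X j * linForm q ^ e)) := by
      rw [B_symm, B_sum_left]
      exact Finset.sum_congr rfl fun j _ => B_symm _ _
    rw [hsum]
    have hterm : ∀ j : Fin 3, B H (MvPolynomial.C (q j) * (MvPolynomial.X j * linForm q ^ e))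
        = q j * ((e.factorial : ℝ) * MvPolynomial.eval q (MvPolynomial.pderiv j H)) := by
      intro j
      rw [B_C_mul_right, B_X_mul', ih (isHomogeneous_pderiv hH j)]
    rw [Finset.sum_congr rfl fun j _ => hterm j]
    have : ∑ j, q j * ((e.factorial : ℝ) * MvPolynomial.eval q (MvPolynomial.pderiv j H))
        = (e.factorial : ℝ) * ∑ j, q j * MvPolynomial.eval q (MvPolynomial.pderiv j H) := by
      rw [Finset.mul_sum]
      exact Finset.sum_congr rfl fun j _ => by ring
    rw [this, euler_eval hH q, Nat.factorial_succ]
    push_cast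
    ring

lemma isHomogeneous_pderiv' {F : S3} {n : ℕ} (hF : F.IsHomogeneous (n + 1)) (j : Fin 3) :
    (MvPolynomial.pderiv j F).IsHomogeneous n := by
  simpa using isHomogeneous_pderiv hF j

/-- key evaluation lemma -/
lemma B_mprod_linForm {q : Fin 3 → ℝ} {G : S3} {d r : ℕ} (hrd : r < d)
    (hG : G.IsHomogeneous d) {L : List (Fin 3)} (hL : L.length = d - r - 1) :
    B (mprod L * linForm q ^ (r + 1)) G
      = ((r + 1).factorial : ℝ) * MvPolynomial.eval q (diffOp L G) := by
  rw [B_mprod_mul, B_symm]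
  have hhom : (diffOp L G).IsHomogeneous (r + 1) := by
    have := diffOp_isHomogeneous hG L
    rw [hL] at this
    have he : d - (d - r - 1) = r + 1 := by omega
    rwa [he] at this
  exact B_linForm_pow q hhom

lemma exists_list_of_monomial (β : Fin 3 →₀ ℕ) :
    ∃ L : List (Fin 3), mprod L = monomial β 1 ∧ L.length = Finsupp.degree β := by
  induction β using Finsupp.induction with
  | zero => exact ⟨[], by simp [mprod_nil], by simp⟩
  | single_add a n f ha hn ih =>
    obtain ⟨L, hL1, hL2⟩ := ih
    refine ⟨List.replicate n a ++ L, ?_, ?_⟩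
    · have hrep : mprod (List.replicate n a) = MvPolynomial.X a ^ n := by
        unfold mprod
        rw [List.map_replicate, List.prod_replicate]
      have happ : mprod (List.replicate n a ++ L)
          = mprod (List.replicate n a) * mprod L := by
        unfold mprod
        rw [List.map_append, List.prod_append]
      rw [happ, hrep, hL1, MvPolynomial.X_pow_eq_monomial, MvPolynomial.monomial_mul, one_mul]
    · rw [List.length_append, List.length_replicate, hL2]
      have : Finsupp.degree (Finsupp.single a n + f)
          = Finsupp.degree (Finsupp.single a n) + Finsupp.degree f := by
        rw [degree_eq_sum_univ, degree_eq_sum_univ, degree_eq_sum_univ,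
          ← Finset.sum_add_distrib]
        exact Finset.sum_congr rfl fun i _ => Finsupp.add_apply _ _ _
      rw [this]
      congr 1
      rw [degree_eq_sum_univ]
      simp [Finsupp.single_apply]

/-- orthogonality: the degree-d part of the power ideal is B-orthogonal to fat point forms -/
lemma B_orth {q : Fin 3 → ℝ} {G : S3} {d r : ℕ} (hrd : r < d) (hG : G.IsHomogeneous d)
    (hV : VanishesToOrder G q (d - r)) (H : S3) :
    B (H * linForm q ^ (r + 1)) G = 0 := by
  conv_lhs => rw [H.as_sum]
  rw [Finset.sum_mul, B_sum_left]
  apply Finset.sum_eq_zero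
  intro β _
  obtain ⟨L, hL1, hL2⟩ := exists_list_of_monomial β
  have hmon : (monomial β (H.coeff β) : S3) = MvPolynomial.C (H.coeff β) * mprod L := by
    rw [hL1, MvPolynomial.C_mul_monomial, mul_one]
  rw [hmon, mul_assoc, B_C_mul_left]
  by_cases hlen : L.length = d - r - 1
  · rw [B_mprod_linForm hrd hG hlen]
    have hvan : MvPolynomial.eval q (diffOp L G) = 0 := hV L (by omega)
    rw [hvan]; ring
  · have hne : d - L.length ≠ r + 1 := by omega
    rw [B_mprod_mul, B_symm]
    rw [B_hom_ne (diffOp_isHomogeneous hG L)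
      ((linForm_isHomogeneous q).pow (r + 1)) (by simpa using hne)]
    ring


/-! VanishesToOrder lemmas -/

lemma vto_pderiv {F : S3} {q : Fin 3 → ℝ} {s : ℕ} (h : VanishesToOrder F q s) (j : Fin 3) :
    VanishesToOrder (MvPolynomial.pderiv j F) q (s - 1) := by
  intro L hL
  have h1 : diffOp L (MvPolynomial.pderiv j F) = diffOp (L ++ [j]) F := by
    rw [diffOp_append]; rfl
  rw [h1]
  exact h _ (by rw [List.length_append]; simp; omega)

lemma vto_mul_aux (q : Fin 3 → ℝ) :
    ∀ (L : List (Fin 3)) (F G : S3) (a b : ℕ), VanishesToOrder F q a →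
      VanishesToOrder G q b → L.length < a + b →
      MvPolynomial.eval q (diffOp L (F * G)) = 0 := by
  intro L
  induction L with
  | nil =>
    intro F G a b hF hG hab
    rw [diffOp_nil, MvPolynomial.eval_mul]
    rcases Nat.lt_or_ge 0 a with ha | ha
    · have := hF [] (by simpa using ha)
      rw [diffOp_nil] at this
      rw [this]; ring
    · have hb : 0 < b := by omega
      have := hG [] (by simpa using hb)
      rw [diffOp_nil] at this
      rw [this]; ring
  | cons i L ih =>
    intro F G a b hF hG hab
    have hsplit : diffOp (i :: L) (F * G)
        = diffOp L (MvPolynomial.pderiv i F * G) + diffOp L (F * MvPolynomial.pderiv i G) := by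
      rw [diffOp_cons, pderiv_diffOp, MvPolynomial.pderiv_mul, map_add]
    rw [hsplit, MvPolynomial.eval_add]
    have hlen : L.length + 1 < a + b := by simpa using hab
    rw [ih (MvPolynomial.pderiv i F) G (a - 1) b (vto_pderiv hF i) hG (by omega),
        ih F (MvPolynomial.pderiv i G) a (b - 1) hF (vto_pderiv hG i) (by omega)]
    ring

lemma vto_mul {F G : S3} {q : Fin 3 → ℝ} {a b : ℕ}
    (hF : VanishesToOrder F q a) (hG : VanishesToOrder G q b) :
    VanishesToOrder (F * G) q (a + b) :=
  fun L hL => vto_mul_aux q L F G a b hF hG hL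

lemma vto_zero (F : S3) (q : Fin 3 → ℝ) : VanishesToOrder F q 0 := by
  intro L hL; omega

lemma vto_pow {H : S3} {q : Fin 3 → ℝ} (h : VanishesToOrder H q 1) (s : ℕ) :
    VanishesToOrder (H ^ s) q s := by
  induction s with
  | zero => exact vto_zero _ _
  | succ s ih =>
    rw [pow_succ]
    exact vto_mul ih h

/-- Euler downward: vanishing of all top-order derivatives implies full vanishing order -/
lemma euler_down {G : S3} {d s : ℕ} (hG : G.IsHomogeneous d) (hs : s ≤ d) (q : Fin 3 → ℝ)
    (h : ∀ L : List (Fin 3), L.length = s - 1 → MvPolynomial.eval q (diffOp L G) = 0) :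
    VanishesToOrder G q s := by
  have aux : ∀ (m : ℕ) (L : List (Fin 3)), L.length + m = s - 1 →
      MvPolynomial.eval q (diffOp L G) = 0 := by
    intro m
    induction m with
    | zero => intro L hL; exact h L (by omega)
    | succ m ih =>
      intro L hL
      have hhom := diffOp_isHomogeneous hG L
      have hpos : 0 < d - L.length := by omega
      have heuler := euler_eval hhom q
      have hterm : ∀ j : Fin 3, MvPolynomial.eval q (MvPolynomial.pderiv j (diffOp L G)) = 0 := by
        intro j
        have : MvPolynomial.pderiv j (diffOp L G) = diffOp (j :: L) G := (diffOp_cons j L G).symm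
        rw [this]
        exact ih (j :: L) (by simp; omega)
      rw [Finset.sum_congr rfl fun j _ => by rw [hterm j, mul_zero]] at heuler
      simp at heuler
      rcases heuler with h1 | h1
      · exfalso; omega
      · exact h1
  intro L hL
  exact aux (s - 1 - L.length) L (by omega)


/-! construction of a nonzero form vanishing to high order -/

lemma eval_linForm (w x : Fin 3 → ℝ) :
    MvPolynomial.eval x (linForm w) = ∑ j, w j * x j := by
  unfold linForm
  rw [map_sum]
  exact Finset.sum_congr rfl fun j _ => by
    rw [MvPolynomial.eval_mul, MvPolynomial.eval_C, MvPolynomial.eval_X]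

def qvec (v : Fin 3 → ℝ) : Fin 3 → ℝ :=
  if v 0 = 0 ∧ v 1 = 0 then ![1, 0, 0] else ![-(v 1), v 0, 0]

lemma qvec_dot (v : Fin 3 → ℝ) : ∑ j, qvec v j * v j = 0 := by
  unfold qvec
  by_cases h : v 0 = 0 ∧ v 1 = 0
  · rw [if_pos h]
    rw [Fin.sum_univ_three]
    simp [h.1]
  · rw [if_neg h]
    rw [Fin.sum_univ_three]
    simp
    ring

lemma qvec_selfdot (v : Fin 3 → ℝ) : ∑ j, qvec v j * qvec v j ≠ 0 := by
  unfold qvec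
  by_cases h : v 0 = 0 ∧ v 1 = 0
  · rw [if_pos h, Fin.sum_univ_three]
    norm_num [Matrix.cons_val_two, Matrix.tail_cons, Matrix.head_cons]
  · rw [if_neg h, Fin.sum_univ_three]
    simp only [Matrix.cons_val_zero, Matrix.cons_val_one, Matrix.head_cons]
    rw [not_and_or] at h
    intro hc
    rcases h with h | h <;> apply h <;> nlinarith [sq_nonneg (v 0), sq_nonneg (v 1)]

lemma linForm_qvec_ne_zero (v : Fin 3 → ℝ) : linForm (qvec v) ≠ 0 := by
  intro h
  have := eval_linForm (qvec v) (qvec v)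
  rw [h] at this
  simp at this
  exact qvec_selfdot v this.symm

lemma alpha_set_nonempty {k : ℕ} (p : Fin k → (Fin 3 → ℝ)) (s : ℕ) :
    {e : ℕ | ∃ F : S3, F ≠ 0 ∧ F.IsHomogeneous e ∧
      ∀ i, VanishesToOrder F (p i) s}.Nonempty := by
  classical
  set H : S3 := ∏ i, linForm (qvec (p i)) with hH
  have hHne : H ≠ 0 := Finset.prod_ne_zero_iff.mpr fun i _ => linForm_qvec_ne_zero (p i)
  have hHhom : H.IsHomogeneous k := by
    have := MvPolynomial.IsHomogeneous.prod Finset.univ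
      (fun i => linForm (qvec (p i))) (fun _ => 1)
      (fun i _ => linForm_isHomogeneous (qvec (p i)))
    simpa using this
  have hHvan : ∀ i, VanishesToOrder H (p i) 1 := by
    intro i L hL
    have hL0 : L = [] := List.length_eq_zero_iff.mp (by omega)
    subst hL0
    rw [diffOp_nil, hH, map_prod]
    apply Finset.prod_eq_zero (Finset.mem_univ i)
    rw [eval_linForm]
    exact qvec_dot (p i)
  refine ⟨k * s, H ^ s, pow_ne_zero s hHne, hHhom.pow s, fun i => vto_pow (hHvan i) s⟩

end Aux13

open Aux13 in

theorem statement13' {k : ℕ} (p : Fin k → (Fin 3 → ℝ))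
    (r d : ℕ) (hrd : r < d) :
    (∀ F : S3, F.IsHomogeneous d →
        F ∈ Ideal.span (Set.range fun i => linForm (p i) ^ (r + 1)))
      ↔ d < sInf {e : ℕ | ∃ F : S3, F ≠ 0 ∧ F.IsHomogeneous e ∧
          ∀ i, VanishesToOrder F (p i) (d - r)} := by
  classical
  set A := {e : ℕ | ∃ F : S3, F ≠ 0 ∧ F.IsHomogeneous e ∧
      ∀ i, VanishesToOrder F (p i) (d - r)} with hA
  have hAne : A.Nonempty := alpha_set_nonempty p (d - r)
  constructor
  · intro hI
    by_contra hlt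
    push_neg at hlt
    have hmem : sInf A ∈ A := Nat.sInf_mem hAne
    obtain ⟨F₀, hF0, hF0hom, hF0v⟩ := hmem
    have he : sInf A ≤ d := hlt
    set G : S3 := F₀ * (MvPolynomial.X 0) ^ (d - sInf A) with hG
    have hGne : G ≠ 0 := mul_ne_zero hF0 (pow_ne_zero _ (MvPolynomial.X_ne_zero 0))
    have hGhom : G.IsHomogeneous d := by
      have h1 := hF0hom.mul (MvPolynomial.isHomogeneous_X_pow 0 (d - sInf A))
      have h2 : sInf A + (d - sInf A) = d := by omega
      rwa [h2] at h1
    have hGv : ∀ i, VanishesToOrder G (p i) (d - r) := by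
      intro i
      have := vto_mul (hF0v i) (vto_zero ((MvPolynomial.X 0 : S3) ^ (d - sInf A)) (p i))
      simpa using this
    obtain ⟨c, hc⟩ := Ideal.mem_span_range_iff_exists_fun.mp (hI G hGhom)
    have hBB : B G G = 0 := by
      have h1 : B (∑ i, c i * linForm (p i) ^ (r + 1)) G = B G G :=
        congrArg (fun x => B x G) hc
      rw [← h1, B_sum_left]
      exact Finset.sum_eq_zero fun i _ => B_orth hrd hGhom (hGv i) (c i)
    exact hGne (eq_zero_of_B_self G hBB)
  · intro hlt F hF
    set V := MvPolynomial.homogeneousSubmodule (Fin 3) ℝ d with hVdef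
    set W := ⨆ i : Fin k, Submodule.map (LinearMap.mulLeft ℝ (linForm (p i) ^ (r + 1)))
        (MvPolynomial.homogeneousSubmodule (Fin 3) ℝ (d - r - 1)) with hWdef
    have hWV : W ≤ V := by
      apply iSup_le
      intro i
      rintro x ⟨h, hh, rfl⟩
      have hh' : h.IsHomogeneous (d - r - 1) :=
        (MvPolynomial.mem_homogeneousSubmodule _ _).mp hh
      have h1 := ((linForm_isHomogeneous (p i)).pow (r + 1)).mul hh'
      have h2 : 1 * (r + 1) + (d - r - 1) = d := by omega
      rw [h2] at h1
      show linForm (p i) ^ (r + 1) * h ∈ V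
      exact (MvPolynomial.mem_homogeneousSubmodule _ _).mpr h1
    haveI hfin : FiniteDimensional ℝ ↥V := by
      have hle : V ≤ MvPolynomial.restrictTotalDegree (Fin 3) ℝ d := by
        intro x hx
        rw [MvPolynomial.mem_restrictTotalDegree]
        exact ((MvPolynomial.mem_homogeneousSubmodule _ _).mp hx).totalDegree_le
      exact Submodule.finiteDimensional_of_le hle
    letI core : InnerProductSpace.Core ℝ ↥V :=
      { inner := fun x y => B x.1 y.1
        conj_inner_symm := fun x y => by
          simpa using B_symm y.1 x.1
        re_inner_nonneg := fun x => by
          simpa using B_self_nonneg x.1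
        definite := fun x hx => Subtype.ext (eq_zero_of_B_self x.1 hx)
        add_left := fun x y z => by
          simpa using B_add_left x.1 y.1 z.1
        smul_left := fun x y c => by
          simpa using B_smul_left c x.1 y.1 }
    letI : NormedAddCommGroup ↥V := core.toNormedAddCommGroup
    letI : InnerProductSpace ℝ ↥V := InnerProductSpace.ofCore core.toCore
    letI : UniformSpace ↥V := PseudoMetricSpace.toUniformSpace
    letI : TopologicalSpace ↥V := UniformSpace.toTopologicalSpace
    set U : Submodule ℝ ↥V := W.comap V.subtype with hUdef
    have hU : U = ⊤ := by
      by_contra hne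
      haveI : CompleteSpace U := (Submodule.complete_of_finiteDimensional U).completeSpace_coe
      haveI : U.HasOrthogonalProjection := Submodule.HasOrthogonalProjection.ofCompleteSpace U
      have hbot : Uᗮ ≠ ⊥ := fun h => hne (Submodule.orthogonal_eq_bot_iff.mp h)
      obtain ⟨g, hgU, hg0⟩ := Submodule.ne_bot_iff _ |>.mp hbot
      have hGhom : (g : S3).IsHomogeneous d :=
        (MvPolynomial.mem_homogeneousSubmodule _ _).mp g.2
      have hGne : (g : S3) ≠ 0 := fun h => hg0 (Subtype.ext h)
      have hvan : ∀ i, VanishesToOrder (g : S3) (p i) (d - r) := by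
        intro i
        apply euler_down hGhom (by omega) (p i)
        intro L hL
        have hL' : L.length = d - r - 1 := by omega
        have hwW : mprod L * linForm (p i) ^ (r + 1) ∈ W := by
          apply Submodule.mem_iSup_of_mem i
          refine ⟨mprod L, ?_, ?_⟩
          · exact (MvPolynomial.mem_homogeneousSubmodule _ _).mpr (hL' ▸ mprod_isHomogeneous L)
          · rw [LinearMap.mulLeft_apply]
            ring
        have hwV : mprod L * linForm (p i) ^ (r + 1) ∈ V := hWV hwW
        have horth := (Submodule.mem_orthogonal U g).mp hgU ⟨_, hwV⟩ hwW
        have hkey := B_mprod_linForm (q := p i) hrd hGhom hL'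
        have hB0 : B (mprod L * linForm (p i) ^ (r + 1)) (g : S3) = 0 := horth
        rw [hB0] at hkey
        have hfac : ((r + 1).factorial : ℝ) ≠ 0 := by
          exact_mod_cast (Nat.factorial_pos (r + 1)).ne'
        rcases mul_eq_zero.mp hkey.symm with h | h
        · exact absurd h hfac
        · exact h
      have hd : d ∈ A := ⟨g, hGne, hGhom, hvan⟩
      have := Nat.sInf_le hd
      omega
    have hFW : F ∈ W := by
      have hFV : F ∈ V := (MvPolynomial.mem_homogeneousSubmodule _ _).mpr hF
      have : (⟨F, hFV⟩ : ↥V) ∈ U := hU ▸ Submodule.mem_top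
      exact this
    have hWI : W ≤ Submodule.restrictScalars ℝ
        (Ideal.span (Set.range fun i => linForm (p i) ^ (r + 1))) := by
      apply iSup_le
      intro i
      rintro x ⟨y, hy, rfl⟩
      show linForm (p i) ^ (r + 1) * y ∈ Ideal.span (Set.range fun i => linForm (p i) ^ (r + 1))
      exact Ideal.mul_mem_right y _ (Ideal.subset_span ⟨i, rfl⟩)
    exact hWI hFW


/-- for pairwise non-proportional nonzero linear forms with dual points
`X = (p 1, …, p k)` and `d > r ≥ 0`, every homogeneous polynomial of degree `d` belongs
to `⟨ℓ₁^{r+1}, …, ℓ_k^{r+1}⟩` if and only if `d < α_{d−r}(X)`. -/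
theorem statement13 {k : ℕ} (p : Fin k → (Fin 3 → ℝ)) (hp : PairwiseNonProp p)
    (r d : ℕ) (hrd : r < d) :
    (∀ F : S3, F.IsHomogeneous d →
        F ∈ Ideal.span (Set.range fun i => linForm (p i) ^ (r + 1)))
      ↔ d < alphaDeg p (d - r) :=
  statement13' p r d hrd

end
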